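/- arXiv:1311.4429 — 4 statements merged into one kernel-verified Lean document; each statement's English description precedes it below -/
import Mathlib

section
/- Let Z be a real normed space and x, y ∈ Z. If x and y are orthogonal, i.e. ‖x + y‖ = ‖x − y‖ = ‖x‖ + ‖y‖, then for every t ∈ [0,1] we have ‖t•x + (1−t)•y‖ = t‖x‖ + (1−t)‖y‖. -/
lemma aux0 {Z : Type*} [NormedAddCommGroup Z] [NormedSpace ℝ Z]
    (x y : Z) (h : ‖x + y‖ = ‖x‖ + ‖y‖) (a b : ℝ) (hb : 0 ≤ b) (hab : b ≤ a) :
    ‖a • x + b • y‖ = a * ‖x‖ + b * ‖y‖ := by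
  have ha : 0 ≤ a := hb.trans hab
  have hax : ‖a • x‖ = a * ‖x‖ := by rw [norm_smul, Real.norm_of_nonneg ha]
  have hby : ‖b • y‖ = b * ‖y‖ := by rw [norm_smul, Real.norm_of_nonneg hb]
  have haby : ‖(a - b) • y‖ = (a - b) * ‖y‖ := by
    rw [norm_smul, Real.norm_of_nonneg (by linarith)]
  have hupper : ‖a • x + b • y‖ ≤ a * ‖x‖ + b * ‖y‖ := by
    calc ‖a • x + b • y‖ ≤ ‖a • x‖ + ‖b • y‖ := norm_add_le _ _
    _ = a * ‖x‖ + b * ‖y‖ := by rw [hax, hby]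
  have heq : a • (x + y) = (a • x + b • y) + (a - b) • y := by module
  have hlow : a * (‖x‖ + ‖y‖) ≤ ‖a • x + b • y‖ + (a - b) * ‖y‖ := by
    calc a * (‖x‖ + ‖y‖) = ‖a • (x + y)‖ := by
          rw [norm_smul, Real.norm_of_nonneg ha, h]
    _ ≤ ‖a • x + b • y‖ + ‖(a - b) • y‖ := by rw [heq]; exact norm_add_le _ _
    _ = ‖a • x + b • y‖ + (a - b) * ‖y‖ := by rw [haby]
  linarith

theorem stmt_0 {Z : Type*} [NormedAddCommGroup Z] [NormedSpace ℝ Z]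
    (x y : Z) (h1 : ‖x + y‖ = ‖x‖ + ‖y‖) (h2 : ‖x - y‖ = ‖x‖ + ‖y‖)
    (t : ℝ) (ht0 : 0 ≤ t) (ht1 : t ≤ 1) :
    ‖t • x + (1 - t) • y‖ = t * ‖x‖ + (1 - t) * ‖y‖ := by
  rcases le_total (1 - t) t with h | h
  · exact aux0 x y h1 t (1 - t) (by linarith) h
  · have h1' : ‖y + x‖ = ‖y‖ + ‖x‖ := by rw [add_comm, h1]; ring
    have := aux0 y x h1' (1 - t) t ht0 h
    rw [add_comm] at this
    linarith
end

section
/- Let Z be a real normed space, e ∈ Z* with ‖e‖ ≤ 1, F_e = {x : ‖x‖ ≤ 1, e(x) = 1} and F_{−e} = {x : ‖x‖ ≤ 1, e(x) = −1}. Let v ∈ Z* with ‖v‖ ≤ 1 and F_v = {x : ‖x‖ ≤ 1, v(x) = 1}, and assume F_v is nonempty and every element of the closed unit ball lies in the convex hull of F_e ∪ F_{−e}. Then F_v ∩ F_e ≠ ∅ or F_{−v} ∩ F_e ≠ ∅ (where F_{−v} = {x : ‖x‖ ≤ 1, v(x) = −1}). -/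
open Set

theorem stmt_8 {Z : Type*} [NormedAddCommGroup Z] [NormedSpace ℝ Z]
    (e v : Z →L[ℝ] ℝ) (he : ‖e‖ ≤ 1) (hv : ‖v‖ ≤ 1)
    (hVnonempty : {x : Z | ‖x‖ ≤ 1 ∧ v x = 1}.Nonempty)
    (hball : ∀ x : Z, ‖x‖ ≤ 1 →
      x ∈ convexHull ℝ ({x : Z | ‖x‖ ≤ 1 ∧ e x = 1} ∪ {x : Z | ‖x‖ ≤ 1 ∧ e x = -1})) :
    ({x : Z | ‖x‖ ≤ 1 ∧ v x = 1} ∩ {x : Z | ‖x‖ ≤ 1 ∧ e x = 1}).Nonempty ∨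
    ({x : Z | ‖x‖ ≤ 1 ∧ v x = -1} ∩ {x : Z | ‖x‖ ≤ 1 ∧ e x = 1}).Nonempty := by
  obtain ⟨x₀, hx₀n, hx₀v⟩ := hVnonempty
  set A : Set Z := {x : Z | ‖x‖ ≤ 1 ∧ e x = 1} with hA
  set B : Set Z := {x : Z | ‖x‖ ≤ 1 ∧ e x = -1} with hB
  have hx₀ := hball x₀ hx₀n
  -- A and B are convex
  have hAc : Convex ℝ A := by
    intro a ha b hb s t hs ht hst
    constructor
    · calc ‖s • a + t • b‖ ≤ ‖s • a‖ + ‖t • b‖ := norm_add_le _ _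
        _ = s * ‖a‖ + t * ‖b‖ := by
            rw [norm_smul, norm_smul, Real.norm_of_nonneg hs, Real.norm_of_nonneg ht]
        _ ≤ s * 1 + t * 1 := by
            gcongr
            exacts [ha.1, hb.1]
        _ = 1 := by linarith
    · simp [ha.2, hb.2]; linarith
  have hBc : Convex ℝ B := by
    intro a ha b hb s t hs ht hst
    constructor
    · calc ‖s • a + t • b‖ ≤ ‖s • a‖ + ‖t • b‖ := norm_add_le _ _
        _ = s * ‖a‖ + t * ‖b‖ := by
            rw [norm_smul, norm_smul, Real.norm_of_nonneg hs, Real.norm_of_nonneg ht]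
        _ ≤ s * 1 + t * 1 := by
            gcongr
            exacts [ha.1, hb.1]
        _ = 1 := by linarith
    · simp [ha.2, hb.2]; linarith
  have hAne : A.Nonempty := by
    by_contra hAe
    have hBe : ¬ B.Nonempty := by
      rintro ⟨b, hb1, hb2⟩
      exact hAe ⟨-b, by simpa using hb1, by simp [hb2]⟩
    rw [not_nonempty_iff_eq_empty] at hAe hBe
    rw [hAe, hBe] at hx₀
    simp at hx₀
  have hBne : B.Nonempty := by
    obtain ⟨a, ha1, ha2⟩ := hAne
    exact ⟨-a, by simpa using ha1, by simp [ha2]⟩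
  rw [hAc.convexHull_union hBc hAne hBne, mem_convexJoin] at hx₀
  obtain ⟨a, ha, b, hb, hab⟩ := hx₀
  obtain ⟨s, t, hs, ht, hst, hxab⟩ := hab
  -- bounds on v a, v b
  have hva : v a ≤ 1 := by
    have := (v.le_opNorm a).trans (by nlinarith [ha.1, norm_nonneg a, v.le_opNorm a, norm_nonneg (v a)] : ‖v‖ * ‖a‖ ≤ 1)
    exact (le_abs_self _).trans (by simpa [Real.norm_eq_abs] using this)
  have hvb : v b ≤ 1 := by
    have := (v.le_opNorm b).trans (by nlinarith [hb.1, norm_nonneg b] : ‖v‖ * ‖b‖ ≤ 1)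
    exact (le_abs_self _).trans (by simpa [Real.norm_eq_abs] using this)
  have hvx : s * v a + t * v b = 1 := by
    have : v (s • a + t • b) = 1 := by rw [hxab]; exact hx₀v
    simpa [map_add, map_smul] using this
  have key : v a = 1 ∨ v b = 1 := by
    by_contra h
    push_neg at h
    have h1 : v a < 1 := lt_of_le_of_ne hva h.1
    have h2 : v b < 1 := lt_of_le_of_ne hvb h.2
    rcases eq_or_lt_of_le hs with hs0 | hs0
    · rcases eq_or_lt_of_le ht with ht0 | ht0
      · rw [← hs0, ← ht0] at hst; linarith
      · nlinarith
    · rcases eq_or_lt_of_le ht with ht0 | ht0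
      · nlinarith
      · nlinarith
  rcases key with h | h
  · exact Or.inl ⟨a, ⟨ha.1, h⟩, ha⟩
  · refine Or.inr ⟨-b, ⟨by simpa using hb.1, by simp [h]⟩, by simpa using hb.1, by simp [hb.2]⟩
end

section
/- Let f, g ∈ L¹(μ) be real-valued integrable functions. If ‖f + g‖₁ = ‖f − g‖₁ = ‖f‖₁ + ‖g‖₁, then f·g = 0 almost everywhere. -/
open MeasureTheory

theorem stmt_11 {Ω : Type*} [MeasurableSpace Ω] (μ : Measure Ω)
    (f g : Ω → ℝ) (hf : Integrable f μ) (hg : Integrable g μ)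
    (hadd : ∫ ω, |f ω + g ω| ∂μ = ∫ ω, |f ω| ∂μ + ∫ ω, |g ω| ∂μ)
    (hsub : ∫ ω, |f ω - g ω| ∂μ = ∫ ω, |f ω| ∂μ + ∫ ω, |g ω| ∂μ) :
    f * g =ᵐ[μ] 0 := by
  have hsum : Integrable (fun ω => |f ω| + |g ω|) μ := hf.abs.add hg.abs
  have hint : ∫ ω, |f ω| + |g ω| ∂μ = ∫ ω, |f ω| ∂μ + ∫ ω, |g ω| ∂μ :=
    integral_add hf.abs hg.abs
  have h1 : (fun ω => |f ω + g ω|) =ᵐ[μ] (fun ω => |f ω| + |g ω|) := by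
    refine (integral_eq_iff_of_ae_le ((hf.add hg).abs) hsum
      (Filter.Eventually.of_forall fun ω => abs_add_le _ _)).mp ?_
    simp only [Pi.add_apply]
    rw [hadd, hint]
  have h2 : (fun ω => |f ω - g ω|) =ᵐ[μ] (fun ω => |f ω| + |g ω|) := by
    refine (integral_eq_iff_of_ae_le ((hf.sub hg).abs) hsum
      (Filter.Eventually.of_forall fun ω => abs_sub _ _)).mp ?_
    simp only [Pi.sub_apply]
    rw [hsub, hint]
  filter_upwards [h1, h2] with ω e1 e2
  simp only [Pi.mul_apply, Pi.zero_apply]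
  have hmin : f ω = 0 ∨ g ω = 0 := by
    rcases abs_cases (f ω + g ω) with ⟨p, _⟩ | ⟨p, _⟩ <;>
      rcases abs_cases (f ω - g ω) with ⟨q, _⟩ | ⟨q, _⟩ <;>
      rcases abs_cases (f ω) with ⟨r, _⟩ | ⟨r, _⟩ <;>
      rcases abs_cases (g ω) with ⟨s, _⟩ | ⟨s, _⟩ <;>
      simp only [e1, e2] at p q <;>
      first
        | (left; linarith)
        | (right; linarith)
  rcases hmin with h | h <;> simp [h]
end

section
/- In ℝⁿ equipped with the ℓ¹ norm, let e = (ε₁, …, εₙ) with each εᵢ ∈ {−1, 1}, regarded as a linear functional via e(x) = Σ εᵢ xᵢ. Then the closed unit ball of (ℝⁿ, ‖·‖₁) equals the convex hull of F_e ∪ F_{−e}, where F_e = {x : ‖x‖₁ = 1, e(x) = 1} and F_{−e} = {x : ‖x‖₁ = 1, e(x) = −1} (for n ≥ 1). -/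
theorem stmt_14 (n : ℕ) (hn : 1 ≤ n) (e : Fin n → ℝ)
    (he : ∀ i, e i = -1 ∨ e i = 1) :
    {x : PiLp 1 (fun _ : Fin n => ℝ) | ‖x‖ ≤ 1} =
      convexHull ℝ
        ({x : PiLp 1 (fun _ : Fin n => ℝ) | ‖x‖ = 1 ∧ ∑ i, e i * x i = 1} ∪
         {x : PiLp 1 (fun _ : Fin n => ℝ) | ‖x‖ = 1 ∧ ∑ i, e i * x i = -1}) := by
  have norm1 : ∀ x : PiLp 1 (fun _ : Fin n => ℝ), ‖x‖ = ∑ i, |x i| := by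
    intro x; rw [PiLp.norm_eq_sum (by norm_num)]; simp [Real.norm_eq_abs]
  have he2 : ∀ i, e i * e i = 1 := by intro i; rcases he i with h | h <;> rw [h] <;> ring
  have heabs : ∀ i, |e i| = 1 := by intro i; rcases he i with h | h <;> rw [h] <;> norm_num
  set S : Set (PiLp 1 (fun _ : Fin n => ℝ)) :=
    ({x | ‖x‖ = 1 ∧ ∑ i, e i * x i = 1} ∪ {x | ‖x‖ = 1 ∧ ∑ i, e i * x i = -1}) with hS
  have hSball : S ⊆ {x : PiLp 1 (fun _ : Fin n => ℝ) | ‖x‖ ≤ 1} := by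
    rintro x (⟨h1, _⟩ | ⟨h1, _⟩) <;> simp [Set.mem_setOf_eq, h1]
  have hball : Convex ℝ {x : PiLp 1 (fun _ : Fin n => ℝ) | ‖x‖ ≤ 1} := by
    have h : {x : PiLp 1 (fun _ : Fin n => ℝ) | ‖x‖ ≤ 1} = Metric.closedBall 0 1 := by
      ext x; simp
    rw [h]; exact convex_closedBall 0 1
  set i0 : Fin n := ⟨0, hn⟩ with hi0
  set w : PiLp 1 (fun _ : Fin n => ℝ) := WithLp.toLp 1 (fun i => if i = i0 then e i0 else 0) with hw
  have hwmem : w ∈ S := by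
    left
    constructor
    · rw [norm1]
      simp [hw, apply_ite abs, Finset.sum_ite_eq', heabs]
    · simp [hw, mul_ite, Finset.sum_ite_eq', he2]
  have hwmem' : -w ∈ S := by
    right
    constructor
    · rw [norm_neg, norm1]
      simp [hw, apply_ite abs, Finset.sum_ite_eq', heabs]
    · have : ∀ i, e i * (-w) i = -(e i * w i) := by intro i; simp [Pi.neg_apply]
      simp only [this, Finset.sum_neg_distrib]
      simp [hw, mul_ite, Finset.sum_ite_eq', he2]
  have h0 : (0 : PiLp 1 (fun _ : Fin n => ℝ)) ∈ convexHull ℝ S := by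
    have := (convex_convexHull ℝ S) (subset_convexHull ℝ S hwmem)
      (subset_convexHull ℝ S hwmem') (by norm_num : (0:ℝ) ≤ 1/2)
      (by norm_num : (0:ℝ) ≤ 1/2) (by norm_num)
    simpa [smul_neg] using this
  have sphere_mem : ∀ x : PiLp 1 (fun _ : Fin n => ℝ), ‖x‖ = 1 → x ∈ convexHull ℝ S := by
    intro x hx
    set p : PiLp 1 (fun _ : Fin n => ℝ) := WithLp.toLp 1 (fun i => if 0 ≤ e i * x i then x i else 0) with hp
    set q : PiLp 1 (fun _ : Fin n => ℝ) := WithLp.toLp 1 (fun i => if 0 ≤ e i * x i then 0 else x i) with hq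
    have hpq : ∀ i, x i = p i + q i := by
      intro i; simp only [hp, hq, PiLp.toLp_apply]; split <;> ring
    have habs_p : ∀ i, |p i| = e i * p i := by
      intro i; simp only [hp, PiLp.toLp_apply]
      rcases le_or_gt 0 (e i * x i) with h | h
      · rw [if_pos h, ← abs_of_nonneg h, abs_mul, heabs, one_mul]
      · rw [if_neg (not_le.mpr h)]; simp
    have habs_q : ∀ i, |q i| = -(e i * q i) := by
      intro i; simp only [hq, PiLp.toLp_apply]
      rcases le_or_gt 0 (e i * x i) with h | h
      · rw [if_pos h]; simp
      · rw [if_neg (not_le.mpr h), ← abs_of_nonpos h.le, abs_mul, heabs, one_mul]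
    have key : ∀ i, |p i| + |q i| = |x i| := by
      intro i; simp only [hp, hq, PiLp.toLp_apply]; split <;> simp
    have hnp : ‖p‖ = ∑ i, e i * p i := by
      rw [norm1]; exact Finset.sum_congr rfl fun i _ => habs_p i
    have hnq : ‖q‖ = -∑ i, e i * q i := by
      rw [norm1, ← Finset.sum_neg_distrib]
      exact Finset.sum_congr rfl fun i _ => habs_q i
    have hsum : ‖p‖ + ‖q‖ = 1 := by
      rw [norm1, norm1, ← Finset.sum_add_distrib]
      simp_rw [key]
      rw [← norm1, hx]
    have hxsum : ∑ i, e i * x i = ‖p‖ - ‖q‖ := by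
      have h1 : ∀ i, e i * x i = e i * p i + e i * q i := by
        intro i; rw [hpq i]; ring
      simp_rw [h1]
      rw [Finset.sum_add_distrib, ← hnp]
      have h2 : ∑ i, e i * q i = -‖q‖ := by linarith [hnq]
      rw [h2]; ring
    rcases eq_or_lt_of_le (norm_nonneg p) with hp0 | hp0
    · -- p = 0, x = q ∈ F_{-e}
      have hxq : ∑ i, e i * x i = -1 := by
        rw [hxsum]; linarith
      exact subset_convexHull ℝ S (Or.inr ⟨hx, hxq⟩)
    rcases eq_or_lt_of_le (norm_nonneg q) with hq0 | hq0
    · have hxp : ∑ i, e i * x i = 1 := by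
        rw [hxsum]; linarith
      exact subset_convexHull ℝ S (Or.inl ⟨hx, hxp⟩)
    · set a : PiLp 1 (fun _ : Fin n => ℝ) := ‖p‖⁻¹ • p with ha
      set b : PiLp 1 (fun _ : Fin n => ℝ) := ‖q‖⁻¹ • q with hb
      have hamem : a ∈ S := by
        left
        constructor
        · rw [ha, norm_smul, Real.norm_eq_abs, abs_of_nonneg (inv_nonneg.mpr (norm_nonneg p)),
            inv_mul_cancel₀ hp0.ne']
        · have : ∀ i, e i * a i = ‖p‖⁻¹ * (e i * p i) := by
            intro i; simp [ha, Pi.smul_apply, smul_eq_mul]; ring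
          simp_rw [this]
          rw [← Finset.mul_sum, ← hnp, inv_mul_cancel₀ hp0.ne']
      have hbmem : b ∈ S := by
        right
        constructor
        · rw [hb, norm_smul, Real.norm_eq_abs, abs_of_nonneg (inv_nonneg.mpr (norm_nonneg q)),
            inv_mul_cancel₀ hq0.ne']
        · have : ∀ i, e i * b i = ‖q‖⁻¹ * (e i * q i) := by
            intro i; simp [hb, Pi.smul_apply, smul_eq_mul]; ring
          simp_rw [this]
          rw [← Finset.mul_sum]
          have : ∑ i, e i * q i = -‖q‖ := by linarith [hnq]
          rw [this]
          field_simp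
      have hxab : x = ‖p‖ • a + ‖q‖ • b := by
        rw [ha, hb, smul_smul, smul_smul, mul_inv_cancel₀ hp0.ne', mul_inv_cancel₀ hq0.ne',
          one_smul, one_smul]
        ext i
        exact hpq i
      rw [hxab]
      exact (convex_convexHull ℝ S) (subset_convexHull ℝ S hamem)
        (subset_convexHull ℝ S hbmem) hp0.le hq0.le hsum
  ext x
  simp only [Set.mem_setOf_eq]
  constructor
  · intro hx
    rcases eq_or_ne x 0 with rfl | hx0
    · exact h0
    · have hxn : 0 < ‖x‖ := norm_pos_iff.mpr hx0
      have hy : ‖(‖x‖⁻¹ • x : PiLp 1 (fun _ : Fin n => ℝ))‖ = 1 := by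
        rw [norm_smul, Real.norm_eq_abs, abs_of_nonneg (inv_nonneg.mpr (norm_nonneg x)),
          inv_mul_cancel₀ hxn.ne']
      have hmem := sphere_mem _ hy
      have hrw : x = ‖x‖ • (‖x‖⁻¹ • x) + (1 - ‖x‖) • (0 : PiLp 1 (fun _ : Fin n => ℝ)) := by
        rw [smul_zero, add_zero, smul_smul, mul_inv_cancel₀ hxn.ne', one_smul]
      rw [hrw]
      exact (convex_convexHull ℝ S) hmem h0 hxn.le (by linarith) (by ring)
  · intro hx
    exact convexHull_min hSball hball hx
end
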